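/- Let U, V be finite sets, E ⊆ U × V a set of edges, and φ_{x,y} : [L] → [R] a map for each (x, y) ∈ E. Let t ≥ 1, let X ⊆ U, and for each x ∈ X let L_x ⊆ [L] be a nonempty set with |L_x| ≤ t. Suppose that for every y ∈ V and all x₁, x₂ ∈ X with (x₁, y) ∈ E and (x₂, y) ∈ E, we have φ_{x₁,y}(L_{x₁}) ∩ φ_{x₂,y}(L_{x₂}) ≠ ∅. Then there exist assignments A_U : U → [L] and A_V : V → [R] such that t² · |{(x, y) ∈ E : x ∈ X and φ_{x,y}(A_U(x)) = A_V(y)}| ≥ |{(x, y) ∈ E : x ∈ X}|. -/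
import Mathlib

/-- Pigeonhole: if `f` maps `s` into a set `T` of size at most `t`, some fiber
has size at least `s.card / t`. -/
lemma pigeon_fiber {α β : Type*} [DecidableEq β] (s : Finset α) (T : Finset β)
    (f : α → β) (hT : T.Nonempty) (hf : ∀ a ∈ s, f a ∈ T) (t : ℕ)
    (hcard : T.card ≤ t) :
    ∃ b ∈ T, s.card ≤ t * (s.filter (fun a => f a = b)).card := by
  classical
  obtain ⟨b, hb, hmax⟩ := T.exists_max_image (fun b => (s.filter (fun a => f a = b)).card) hT
  refine ⟨b, hb, ?_⟩
  calc s.card = ∑ c ∈ T, (s.filter (fun a => f a = c)).card :=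
        Finset.card_eq_sum_card_fiberwise hf
    _ ≤ ∑ _c ∈ T, (s.filter (fun a => f a = b)).card :=
        Finset.sum_le_sum (fun c hc => hmax c hc)
    _ = T.card * (s.filter (fun a => f a = b)).card := by
        rw [Finset.sum_const, smul_eq_mul]
    _ ≤ t * (s.filter (fun a => f a = b)).card := Nat.mul_le_mul_right _ hcard

/-- **List-decoding to labeling (soundness of Lemma 4.3).** Given nonempty
candidate label lists `L_x` of size at most `t` for each `x ∈ X` whose
projections pairwise intersect at every common neighbor `y`, there is an
assignment satisfying at least a `1/t²` fraction of the constraints touching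
`X`. -/
theorem listDecoding_labeling {U V : Type*} [Fintype U] [Fintype V]
    [DecidableEq U] [DecidableEq V]
    (L R t : ℕ) (hL : 0 < L) (hR : 0 < R) (ht : 1 ≤ t)
    (E : Finset (U × V)) (φ : U → V → Fin L → Fin R)
    (X : Finset U) (Lx : U → Finset (Fin L))
    (hne : ∀ x ∈ X, (Lx x).Nonempty)
    (hsize : ∀ x ∈ X, (Lx x).card ≤ t)
    (hint : ∀ y : V, ∀ x₁ ∈ X, ∀ x₂ ∈ X, (x₁, y) ∈ E → (x₂, y) ∈ E →
      (((Lx x₁).image (φ x₁ y)) ∩ ((Lx x₂).image (φ x₂ y))).Nonempty) :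
    ∃ (A_U : U → Fin L) (A_V : V → Fin R),
      (E.filter (fun p => p.1 ∈ X)).card ≤
        t ^ 2 * (E.filter (fun p =>
          p.1 ∈ X ∧ φ p.1 p.2 (A_U p.1) = A_V p.2)).card := by
  classical
  have l0 : Fin L := ⟨0, hL⟩
  have r0 : Fin R := ⟨0, hR⟩
  haveI : Inhabited (Fin L) := ⟨l0⟩
  -- the candidate set for each y
  let B : V → Finset (Fin R) := fun y =>
    if h : ∃ x, x ∈ X ∧ (x, y) ∈ E then (Lx h.choose).image (φ h.choose y) else {r0}
  have hBne : ∀ y, (B y).Nonempty := by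
    intro y
    simp only [B]
    split
    · next h => exact (hne _ h.choose_spec.1).image _
    · exact ⟨r0, by simp⟩
  have hBcard : ∀ y, (B y).card ≤ t := by
    intro y
    simp only [B]
    split
    · next h => exact Finset.card_image_le.trans (hsize _ h.choose_spec.1)
    · simpa using ht
  -- each edge touching X has a witness label projecting into B
  have hkey : ∀ p : U × V, p ∈ E → p.1 ∈ X → ∃ a ∈ Lx p.1, φ p.1 p.2 a ∈ B p.2 := by
    intro p hpE hpX
    have hpE' : (p.1, p.2) ∈ E := by simpa using hpE
    have h : ∃ x, x ∈ X ∧ (x, p.2) ∈ E := ⟨p.1, hpX, hpE'⟩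
    obtain ⟨r, hr⟩ := hint p.2 p.1 hpX h.choose h.choose_spec.1 hpE' h.choose_spec.2
    rw [Finset.mem_inter] at hr
    obtain ⟨a, ha, hfa⟩ := Finset.mem_image.mp hr.1
    refine ⟨a, ha, ?_⟩
    have : B p.2 = (Lx h.choose).image (φ h.choose p.2) := by
      simp only [B, dif_pos h]
    rw [this, hfa]
    exact hr.2
  -- the witness function
  let w : U × V → Fin L := fun p =>
    if h : ∃ a ∈ Lx p.1, φ p.1 p.2 a ∈ B p.2 then h.choose else l0
  have hw : ∀ p ∈ E, p.1 ∈ X → w p ∈ Lx p.1 ∧ φ p.1 p.2 (w p) ∈ B p.2 := by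
    intro p hpE hpX
    have h := hkey p hpE hpX
    simp only [w, dif_pos h]
    exact ⟨h.choose_spec.1, h.choose_spec.2⟩
  -- step 1: choose A_U by pigeonhole at each x ∈ X
  have hstep1 : ∀ x ∈ X, ∃ b ∈ Lx x,
      (E.filter fun p => p.1 = x).card ≤
        t * ((E.filter fun p => p.1 = x).filter (fun p => w p = b)).card := by
    intro x hx
    apply pigeon_fiber _ _ _ (hne x hx) _ t (hsize x hx)
    intro p hp
    rw [Finset.mem_filter] at hp
    have := (hw p hp.1 (hp.2 ▸ hx)).1
    rwa [hp.2] at this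
  choose! A_U hAUmem hAU using hstep1
  -- the intermediate edge set
  let E' := E.filter (fun p => p.1 ∈ X ∧ w p = A_U p.1)
  have hE'first : ∀ p ∈ E', p.1 ∈ X := by
    intro p hp
    exact ((Finset.mem_filter.mp hp).2).1
  -- |E_X| ≤ t * |E'|
  have hchain1 : (E.filter fun p => p.1 ∈ X).card ≤ t * E'.card := by
    have h1 : (E.filter fun p => p.1 ∈ X).card =
        ∑ x ∈ X, ((E.filter fun p => p.1 ∈ X).filter fun p => p.1 = x).card :=
      Finset.card_eq_sum_card_fiberwise (fun p hp => (Finset.mem_filter.mp hp).2)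
    have h2 : ∀ x ∈ X, ((E.filter fun p => p.1 ∈ X).filter fun p => p.1 = x) =
        E.filter fun p => p.1 = x := by
      intro x hx
      ext p
      simp only [Finset.mem_filter]
      constructor
      · rintro ⟨⟨hE, _⟩, hx'⟩; exact ⟨hE, hx'⟩
      · rintro ⟨hE, hx'⟩; exact ⟨⟨hE, hx' ▸ hx⟩, hx'⟩
    have h3 : ∀ x ∈ X, ((E.filter fun p => p.1 = x).filter (fun p => w p = A_U x)) =
        E'.filter fun p => p.1 = x := by
      intro x hx
      ext p
      simp only [E', Finset.mem_filter]
      constructor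
      · rintro ⟨⟨hE, hx'⟩, hwp⟩
        exact ⟨⟨hE, hx' ▸ hx, by rw [hx']; exact hwp⟩, hx'⟩
      · rintro ⟨⟨hE, _, hwp⟩, hx'⟩
        exact ⟨⟨hE, hx'⟩, by rw [← hx']; exact hwp⟩
    have h4 : E'.card = ∑ x ∈ X, (E'.filter fun p => p.1 = x).card :=
      Finset.card_eq_sum_card_fiberwise hE'first
    calc (E.filter fun p => p.1 ∈ X).card
        = ∑ x ∈ X, ((E.filter fun p => p.1 ∈ X).filter fun p => p.1 = x).card := h1
      _ = ∑ x ∈ X, (E.filter fun p => p.1 = x).card :=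
          Finset.sum_congr rfl (fun x hx => by rw [h2 x hx])
      _ ≤ ∑ x ∈ X, t * ((E.filter fun p => p.1 = x).filter (fun p => w p = A_U x)).card :=
          Finset.sum_le_sum (fun x hx => hAU x hx)
      _ = ∑ x ∈ X, t * (E'.filter fun p => p.1 = x).card :=
          Finset.sum_congr rfl (fun x hx => by rw [h3 x hx])
      _ = t * ∑ x ∈ X, (E'.filter fun p => p.1 = x).card := by rw [Finset.mul_sum]
      _ = t * E'.card := by rw [← h4]
  -- step 2: choose A_V by pigeonhole at each y
  have hstep2 : ∀ y : V, ∃ b ∈ B y,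
      (E'.filter fun p => p.2 = y).card ≤
        t * ((E'.filter fun p => p.2 = y).filter
          (fun p => φ p.1 p.2 (A_U p.1) = b)).card := by
    intro y
    apply pigeon_fiber _ _ _ (hBne y) _ t (hBcard y)
    intro p hp
    simp only [E', Finset.mem_filter] at hp
    obtain ⟨⟨hpE, hpX, hwp⟩, hp2⟩ := hp
    subst hp2
    have := (hw p hpE hpX).2
    rwa [hwp] at this
  choose A_V hAVmem hAV using hstep2
  refine ⟨A_U, A_V, ?_⟩
  -- final chain
  set E'' := E.filter (fun p => p.1 ∈ X ∧ φ p.1 p.2 (A_U p.1) = A_V p.2) with hE''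
  have h5 : ∀ y : V, ((E'.filter fun p => p.2 = y).filter
      (fun p => φ p.1 p.2 (A_U p.1) = A_V y)) ⊆ E''.filter fun p => p.2 = y := by
    intro y p hp
    simp only [E', E'', Finset.mem_filter] at hp ⊢
    obtain ⟨⟨⟨hpE, hpX, _⟩, hp2⟩, hφ⟩ := hp
    subst hp2
    exact ⟨⟨hpE, hpX, hφ⟩, rfl⟩
  have hchain2 : E'.card ≤ t * E''.card := by
    have h6 : E'.card = ∑ y ∈ Finset.univ, (E'.filter fun p => p.2 = y).card :=
      Finset.card_eq_sum_card_fiberwise (fun p _ => Finset.mem_univ _)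
    have h7 : E''.card = ∑ y ∈ Finset.univ, (E''.filter fun p => p.2 = y).card :=
      Finset.card_eq_sum_card_fiberwise (fun p _ => Finset.mem_univ _)
    calc E'.card = ∑ y ∈ Finset.univ, (E'.filter fun p => p.2 = y).card := h6
      _ ≤ ∑ y ∈ Finset.univ, t * ((E'.filter fun p => p.2 = y).filter
            (fun p => φ p.1 p.2 (A_U p.1) = A_V y)).card :=
          Finset.sum_le_sum (fun y _ => hAV y)
      _ ≤ ∑ y ∈ Finset.univ, t * (E''.filter fun p => p.2 = y).card :=
          Finset.sum_le_sum (fun y _ =>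
            Nat.mul_le_mul_left _ (Finset.card_le_card (h5 y)))
      _ = t * ∑ y ∈ Finset.univ, (E''.filter fun p => p.2 = y).card := by
          rw [Finset.mul_sum]
      _ = t * E''.card := by rw [← h7]
  calc (E.filter fun p => p.1 ∈ X).card ≤ t * E'.card := hchain1
    _ ≤ t * (t * E''.card) := Nat.mul_le_mul_left _ hchain2
    _ = t ^ 2 * E''.card := by ring
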